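/- Let s ≥ 1, t = 5s, and let P = A ∪ B be a balanced bipartite poset with |P| = 4t that is partitioned into two disjoint balanced subposets T and T', each a copy of the standard example S_t, with matchings T = {a_1,…,a_t} ∪ {b_1,…,b_t} and T' = {w_1,…,w_t} ∪ {z_1,…,z_t}. If for each i = 1,…,t the 4-element subposet {a_i, b_i, w_i, z_i} is not isomorphic to S_2, then Idim(P) ≤ 9s. -/

import Mathlib

/-- `x` and `y` are incomparable elements of a poset. -/
def Incomp {α : Type*} [PartialOrder α] (x y : α) : Prop := ¬ x ≤ y ∧ ¬ y ≤ x

/-- `r` is a linear extension of the partial order on `α`. -/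
def IsLinearExtension {α : Type*} [PartialOrder α] (r : α → α → Prop) : Prop :=
  IsLinearOrder α r ∧ ∀ x y : α, x ≤ y → r x y

/-- `α` admits a realizer consisting of `d` linear extensions. -/
def RealizerOfSize (α : Type*) [PartialOrder α] (d : ℕ) : Prop :=
  ∃ L : Fin d → (α → α → Prop), (∀ i, IsLinearExtension (L i)) ∧
    ∀ x y : α, x ≤ y ↔ ∀ i, L i x y

/-- The Dushnik–Miller dimension: the least positive integer `d`
for which the order is the intersection of `d` linear extensions. -/
noncomputable def dimP (α : Type*) [PartialOrder α] : ℕ :=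
  sInf {d | 0 < d ∧ RealizerOfSize α d}

/-- The "interval dimension" of a bipartite poset `P = A ∪ B`: the least `d` such that
some `d` linear extensions reverse every incomparable pair `(a,b) ∈ A × B`. -/
noncomputable def Idim (α : Type*) [PartialOrder α] (A B : Set α) : ℕ :=
  sInf {d | ∃ L : Fin d → (α → α → Prop), (∀ i, IsLinearExtension (L i)) ∧
    ∀ a ∈ A, ∀ b ∈ B, Incomp a b → ∃ i, L i b a}


set_option linter.unusedSectionVars false
set_option linter.unusedVariables false

open Classical

noncomputable section Idim16

namespace Idim16

variable {α : Type*} [PartialOrder α] [Fintype α]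
variable {t : ℕ}

/-- `x` is one of the minimal elements (an `a i` or `w i`). -/
def AForm (a w : Fin t → α) (x : α) : Prop := (∃ i, a i = x) ∨ (∃ i, w i = x)

/-- `x` is one of the maximal elements (a `b i` or `z i`). -/
def BForm (b z : Fin t → α) (x : α) : Prop := (∃ i, b i = x) ∨ (∃ i, z i = x)

/-- position of a B-element, determined by slot functions `g` (for `b`'s) and `h` (for `z`'s). -/
def bpos (b z : Fin t → α) (g h : Fin t → ℕ) (y : α) : ℕ :=
  if h1 : ∃ i, b i = y then 2 * g h1.choose + 2
  else if h2 : ∃ i, z i = y then 2 * h h2.choose + 2 else 0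

lemma bpos_b (b z : Fin t → α) (hb : Function.Injective b) (g h : Fin t → ℕ) (j : Fin t) :
    bpos b z g h (b j) = 2 * g j + 2 := by
  have h1 : ∃ i, b i = b j := ⟨j, rfl⟩
  rw [bpos, dif_pos h1]
  have := h1.choose_spec
  rw [hb this]

lemma bpos_z (b z : Fin t → α) (hz : Function.Injective z)
    (hbz : ∀ i j, b i ≠ z j) (g h : Fin t → ℕ) (j : Fin t) :
    bpos b z g h (z j) = 2 * h j + 2 := by
  have h1 : ¬ ∃ i, b i = z j := by rintro ⟨i, hi⟩; exact hbz i j hi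
  have h2 : ∃ i, z i = z j := ⟨j, rfl⟩
  rw [bpos, dif_neg h1, dif_pos h2]
  have := h2.choose_spec
  rw [hz this]

lemma bpos_ge2 (b z : Fin t → α) (g h : Fin t → ℕ) {y : α} (hy : BForm b z y) :
    2 ≤ bpos b z g h y := by
  rw [bpos]
  split
  · omega
  · rcases hy with hy | hy
    · exact absurd hy (by assumption)
    · rw [dif_pos hy]; omega

/-- The rank function for the linear extension. -/
def rkn (b z : Fin t → α) (g h : Fin t → ℕ) (x : α) : ℕ :=
  if BForm b z x then bpos b z g h x
  else if hne : ((Finset.univ.filter (fun y => x < y)).image (bpos b z g h)).Nonempty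
  then ((Finset.univ.filter (fun y => x < y)).image (bpos b z g h)).min' hne - 1
  else (Finset.univ.image (bpos b z g h)).max'
    ⟨bpos b z g h x, Finset.mem_image_of_mem _ (Finset.mem_univ x)⟩ + 1

/-- rank respects the partial order. -/
lemma rkn_lt (b z : Fin t → α) (a w : Fin t → α)
    (hstr : ∀ u v : α, u < v → AForm a w u ∧ BForm b z v)
    (hAB : ∀ x : α, AForm a w x → ¬ BForm b z x)
    (g h : Fin t → ℕ) {u v : α} (huv : u < v) :
    rkn b z g h u < rkn b z g h v := by
  obtain ⟨hAu, hBv⟩ := hstr u v huv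
  have hnotB : ¬ BForm b z u := hAB u hAu
  have hmemv : bpos b z g h v ∈ (Finset.univ.filter (fun y => u < y)).image (bpos b z g h) :=
    Finset.mem_image_of_mem _ (Finset.mem_filter.2 ⟨Finset.mem_univ _, huv⟩)
  have hne : ((Finset.univ.filter (fun y => u < y)).image (bpos b z g h)).Nonempty := ⟨_, hmemv⟩
  rw [rkn, if_neg hnotB, dif_pos hne, rkn, if_pos hBv]
  have hle := Finset.min'_le _ _ hmemv
  have h2 : 2 ≤ bpos b z g h v := bpos_ge2 b z g h hBv
  omega

/-- Reversal criterion: if `y`'s position is strictly (by 2) below all upper covers of `x`,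
then `y` is ranked below `x`. -/
lemma rkn_rev (b z : Fin t → α) (a w : Fin t → α)
    (hstr : ∀ u v : α, u < v → AForm a w u ∧ BForm b z v)
    (hAB : ∀ x : α, AForm a w x → ¬ BForm b z x)
    (g h : Fin t → ℕ) {x y : α} (hxA : AForm a w x) (hyB : BForm b z y)
    (hrev : ∀ u : α, x < u → bpos b z g h y + 2 ≤ bpos b z g h u) :
    rkn b z g h y < rkn b z g h x := by
  have hnotB : ¬ BForm b z x := hAB x hxA
  rw [rkn, if_pos hyB, rkn, if_neg hnotB]
  split
  · rename_i hne
    obtain ⟨p, hp, hpeq⟩ := Finset.mem_image.1 (Finset.min'_mem _ hne)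
    have hlt : x < p := (Finset.mem_filter.1 hp).2
    have := hrev p hlt
    omega
  · have hmem : bpos b z g h y ∈ Finset.univ.image (bpos b z g h) :=
      Finset.mem_image_of_mem _ (Finset.mem_univ y)
    have := Finset.le_max' _ _ hmem
    omega

/-- The linear extension determined by slot functions `g`, `h`. -/
def ordn (b z : Fin t → α) (g h : Fin t → ℕ) : α → α → Prop :=
  fun u v => rkn b z g h u < rkn b z g h v ∨
    (rkn b z g h u = rkn b z g h v ∧ ((Fintype.equivFin α) u : ℕ) ≤ (Fintype.equivFin α) v)

lemma ordn_isLinearExtension (b z : Fin t → α) (a w : Fin t → α)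
    (hstr : ∀ u v : α, u < v → AForm a w u ∧ BForm b z v)
    (hAB : ∀ x : α, AForm a w x → ¬ BForm b z x)
    (g h : Fin t → ℕ) : IsLinearExtension (ordn b z g h) := by
  constructor
  · refine { refl := ?_, trans := ?_, antisymm := ?_, total := ?_ }
    · intro x; exact Or.inr ⟨rfl, le_refl _⟩
    · intro x y zz hxy hyz
      rcases hxy with hxy | ⟨e1, l1⟩ <;> rcases hyz with hyz | ⟨e2, l2⟩
      · exact Or.inl (hxy.trans hyz)
      · exact Or.inl (e2 ▸ hxy)
      · exact Or.inl (e1 ▸ hyz)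
      · exact Or.inr ⟨e1.trans e2, l1.trans l2⟩
    · intro x y hxy hyx
      rcases hxy with hxy | ⟨e1, l1⟩ <;> rcases hyx with hyx | ⟨e2, l2⟩
      · omega
      · omega
      · omega
      · have : ((Fintype.equivFin α) x : ℕ) = (Fintype.equivFin α) y := le_antisymm l1 l2
        exact (Fintype.equivFin α).injective (Fin.val_injective this)
    · intro x y
      rcases lt_trichotomy (rkn b z g h x) (rkn b z g h y) with hlt | heq | hgt
      · exact Or.inl (Or.inl hlt)
      · rcases le_total ((Fintype.equivFin α) x : ℕ) ((Fintype.equivFin α) y : ℕ) with hle | hle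
        · exact Or.inl (Or.inr ⟨heq, hle⟩)
        · exact Or.inr (Or.inr ⟨heq.symm, hle⟩)
      · exact Or.inr (Or.inl hgt)
  · intro x y hxy
    rcases eq_or_lt_of_le hxy with rfl | hlt
    · exact Or.inr ⟨rfl, le_refl _⟩
    · exact Or.inl (rkn_lt b z a w hstr hAB g h hlt)

section Rev

variable (a b w z : Fin t → α)
variable (hbinj : Function.Injective b) (hzinj : Function.Injective z)
variable (hbz : ∀ i j, b i ≠ z j)
variable (hstr : ∀ u v : α, u < v → AForm a w u ∧ BForm b z v)
variable (hAB : ∀ x : α, AForm a w x → ¬ BForm b z x)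
variable (hT : ∀ i j, a i < b j ↔ i ≠ j)
variable (hT' : ∀ i j, w i < z j ↔ i ≠ j)

set_option maxHeartbeats 800000

include hbinj hzinj hbz hstr hAB hT hT'

/-- reverse the pair `(a i, b q)` -/
lemma rev_ab (g h : Fin t → ℕ) {i q : Fin t}
    (h1 : ∀ j, j ≠ i → g q < g j) (h2 : ∀ j, a i < z j → g q < h j) :
    ordn b z g h (b q) (a i) := by
  left
  apply rkn_rev b z a w hstr hAB g h (Or.inl ⟨i, rfl⟩) (Or.inl ⟨q, rfl⟩)
  intro u hu
  rcases (hstr _ _ hu).2 with ⟨j, rfl⟩ | ⟨j, rfl⟩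
  · rw [bpos_b b z hbinj, bpos_b b z hbinj]
    have := h1 j (Ne.symm ((hT i j).1 hu))
    omega
  · rw [bpos_b b z hbinj, bpos_z b z hzinj hbz]
    have := h2 j hu
    omega

/-- reverse the pair `(a i, z q)` -/
lemma rev_az (g h : Fin t → ℕ) {i q : Fin t}
    (h1 : ∀ j, j ≠ i → h q < g j) (h2 : ∀ j, a i < z j → h q < h j) :
    ordn b z g h (z q) (a i) := by
  left
  apply rkn_rev b z a w hstr hAB g h (Or.inl ⟨i, rfl⟩) (Or.inr ⟨q, rfl⟩)
  intro u hu
  rcases (hstr _ _ hu).2 with ⟨j, rfl⟩ | ⟨j, rfl⟩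
  · rw [bpos_z b z hzinj hbz, bpos_b b z hbinj]
    have := h1 j (Ne.symm ((hT i j).1 hu))
    omega
  · rw [bpos_z b z hzinj hbz, bpos_z b z hzinj hbz]
    have := h2 j hu
    omega

/-- reverse the pair `(w i, z q)` -/
lemma rev_wz (g h : Fin t → ℕ) {i q : Fin t}
    (h1 : ∀ j, j ≠ i → h q < h j) (h2 : ∀ j, w i < b j → h q < g j) :
    ordn b z g h (z q) (w i) := by
  left
  apply rkn_rev b z a w hstr hAB g h (Or.inr ⟨i, rfl⟩) (Or.inr ⟨q, rfl⟩)
  intro u hu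
  rcases (hstr _ _ hu).2 with ⟨j, rfl⟩ | ⟨j, rfl⟩
  · rw [bpos_z b z hzinj hbz, bpos_b b z hbinj]
    have := h2 j hu
    omega
  · rw [bpos_z b z hzinj hbz, bpos_z b z hzinj hbz]
    have := h1 j (Ne.symm ((hT' i j).1 hu))
    omega

/-- reverse the pair `(w i, b q)` -/
lemma rev_wb (g h : Fin t → ℕ) {i q : Fin t}
    (h1 : ∀ j, j ≠ i → g q < h j) (h2 : ∀ j, w i < b j → g q < g j) :
    ordn b z g h (b q) (w i) := by
  left
  apply rkn_rev b z a w hstr hAB g h (Or.inr ⟨i, rfl⟩) (Or.inl ⟨q, rfl⟩)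
  intro u hu
  rcases (hstr _ _ hu).2 with ⟨j, rfl⟩ | ⟨j, rfl⟩
  · rw [bpos_b b z hbinj, bpos_b b z hbinj]
    have := h2 j hu
    omega
  · rw [bpos_b b z hbinj, bpos_z b z hzinj hbz]
    have := h1 j (Ne.symm ((hT' i j).1 hu))
    omega

end Rev

/-- A context bundling all structural facts about the bipartite poset. -/
structure Ctx (α : Type*) [PartialOrder α] [Fintype α] (t : ℕ) where
  a : Fin t → α
  b : Fin t → α
  w : Fin t → α
  z : Fin t → α
  ht : 2 ≤ t
  hbinj : Function.Injective b
  hzinj : Function.Injective z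
  hbz : ∀ i j, b i ≠ z j
  hstr : ∀ u v : α, u < v → AForm a w u ∧ BForm b z v
  hAB : ∀ x : α, AForm a w x → ¬ BForm b z x
  hT : ∀ i j, a i < b j ↔ i ≠ j
  hT' : ∀ i j, w i < z j ↔ i ≠ j

namespace Ctx

variable (C : Ctx α t)

/-- slot function for the `b`'s in a Tz-order: `b j₀` at slot 1, rest at the end. -/
def gzA (j₀ : Fin t) : Fin t → ℕ := fun p => if p = j₀ then 1 else 10 * t + p.val

/-- slot function for the `z`'s in a Tz-order: optional head `z v` at slot 0,
then the `z`'s not above `a j₀`, then those above `a j₀`. -/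
def hzA (vo : Option (Fin t)) (j₀ : Fin t) : Fin t → ℕ :=
  fun q => if vo = some q then 0 else if C.a j₀ < C.z q then 5 * t + q.val else t + q.val

/-- slot function for the `b`'s in a Tb-order. -/
def gbA (jo : Option (Fin t)) (v₀ : Fin t) : Fin t → ℕ :=
  fun q => if jo = some q then 0 else if C.w v₀ < C.b q then 5 * t + q.val else t + q.val

/-- slot function for the `z`'s in a Tb-order. -/
def hbA (v₀ : Fin t) : Fin t → ℕ := fun p => if p = v₀ then 1 else 10 * t + p.val

/-- The order `(z v, b j₀, z's-not-above-a j₀, z's-above-a j₀, other b's)`. -/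
def TzOrd (vo : Option (Fin t)) (j₀ : Fin t) : α → α → Prop :=
  ordn C.b C.z (gzA j₀) (C.hzA vo j₀)

/-- The order `(b j, z v₀, b's-not-above-w v₀, b's-above-w v₀, other z's)`. -/
def TbOrd (jo : Option (Fin t)) (v₀ : Fin t) : α → α → Prop :=
  ordn C.b C.z (C.gbA jo v₀) (hbA v₀)

-- evaluation lemmas for the slot functions
lemma gzA_self (j₀ : Fin t) : (gzA j₀ : Fin t → ℕ) j₀ = 1 := if_pos rfl
lemma gzA_ne {p j₀ : Fin t} (h : p ≠ j₀) : (gzA j₀ : Fin t → ℕ) p = 10 * t + p.val := if_neg h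
lemma gzA_pos (ht : 2 ≤ t) (j₀ p : Fin t) : 0 < (gzA j₀ : Fin t → ℕ) p := by
  unfold gzA; split <;> omega
lemma hzA_head {vo : Option (Fin t)} {q j₀ : Fin t} (h : vo = some q) :
    C.hzA vo j₀ q = 0 := by unfold hzA; rw [if_pos h]
lemma hzA_above {vo : Option (Fin t)} {q j₀ : Fin t} (h : vo ≠ some q)
    (ha : C.a j₀ < C.z q) : C.hzA vo j₀ q = 5 * t + q.val := by
  unfold hzA; rw [if_neg h, if_pos ha]
lemma hzA_low {vo : Option (Fin t)} {q j₀ : Fin t} (hq : ¬ C.a j₀ < C.z q) :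
    C.hzA vo j₀ q ≤ t + q.val := by
  unfold hzA; rw [if_neg hq]; split <;> omega
lemma hzA_ge {vo : Option (Fin t)} {q j₀ : Fin t} (h : vo ≠ some q) :
    t ≤ C.hzA vo j₀ q := by
  unfold hzA; rw [if_neg h]; split <;> omega
lemma gbA_head {jo : Option (Fin t)} {q v₀ : Fin t} (h : jo = some q) :
    C.gbA jo v₀ q = 0 := by unfold gbA; rw [if_pos h]
lemma gbA_above {jo : Option (Fin t)} {q v₀ : Fin t} (h : jo ≠ some q)
    (hb : C.w v₀ < C.b q) : C.gbA jo v₀ q = 5 * t + q.val := by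
  unfold gbA; rw [if_neg h, if_pos hb]
lemma gbA_low {jo : Option (Fin t)} {q v₀ : Fin t} (hq : ¬ C.w v₀ < C.b q) :
    C.gbA jo v₀ q ≤ t + q.val := by
  unfold gbA; rw [if_neg hq]; split <;> omega
lemma gbA_ge {jo : Option (Fin t)} {q v₀ : Fin t} (h : jo ≠ some q) :
    t ≤ C.gbA jo v₀ q := by
  unfold gbA; rw [if_neg h]; split <;> omega
lemma hbA_self (v₀ : Fin t) : (hbA v₀ : Fin t → ℕ) v₀ = 1 := if_pos rfl
lemma hbA_ne {p v₀ : Fin t} (h : p ≠ v₀) : (hbA v₀ : Fin t → ℕ) p = 10 * t + p.val := if_neg h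
lemma hbA_pos (ht : 2 ≤ t) (v₀ p : Fin t) : 0 < (hbA v₀ : Fin t → ℕ) p := by
  unfold hbA; split <;> omega

lemma TzOrd_lin (vo : Option (Fin t)) (j₀ : Fin t) : IsLinearExtension (C.TzOrd vo j₀) :=
  ordn_isLinearExtension C.b C.z C.a C.w C.hstr C.hAB _ _

lemma TbOrd_lin (jo : Option (Fin t)) (v₀ : Fin t) : IsLinearExtension (C.TbOrd jo v₀) :=
  ordn_isLinearExtension C.b C.z C.a C.w C.hstr C.hAB _ _

/-- Tz covers the pair `(a j₀, b j₀)`, provided the optional head is not above `a j₀`. -/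
lemma zL1 {vo : Option (Fin t)} {j₀ : Fin t} (hvo : ∀ v, vo = some v → ¬ C.a j₀ < C.z v) :
    C.TzOrd vo j₀ (C.b j₀) (C.a j₀) := by
  have ht := C.ht
  apply rev_ab C.a C.b C.w C.z C.hbinj C.hzinj C.hbz C.hstr C.hAB C.hT C.hT'
  · intro j hj
    rw [gzA_self, gzA_ne hj]; omega
  · intro j hj
    have hne : vo ≠ some j := fun hh => hvo j hh hj
    rw [gzA_self, C.hzA_above hne hj]; omega

/-- Tz covers every pair `(a j₀, z q)` with `z q` incomparable to `a j₀`. -/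
lemma zL2 {vo : Option (Fin t)} {j₀ : Fin t} (hvo : ∀ v, vo = some v → ¬ C.a j₀ < C.z v)
    {q : Fin t} (hq : ¬ C.a j₀ < C.z q) :
    C.TzOrd vo j₀ (C.z q) (C.a j₀) := by
  have ht := C.ht
  have hqt := q.isLt
  have hlow := C.hzA_low (vo := vo) hq
  apply rev_az C.a C.b C.w C.z C.hbinj C.hzinj C.hbz C.hstr C.hAB C.hT C.hT'
  · intro j hj
    rw [gzA_ne hj]; omega
  · intro j hj
    have hne : vo ≠ some j := fun hh => hvo j hh hj
    rw [C.hzA_above hne hj]; omega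

/-- Tz with head `z v` covers the pair `(w v, z v)`. -/
lemma zL3 {v j₀ : Fin t} : C.TzOrd (some v) j₀ (C.z v) (C.w v) := by
  have ht := C.ht
  have hh := C.hzA_head (q := v) (j₀ := j₀) rfl
  apply rev_wz C.a C.b C.w C.z C.hbinj C.hzinj C.hbz C.hstr C.hAB C.hT C.hT'
  · intro j hj
    have hne : (some v : Option (Fin t)) ≠ some j := by
      simp only [ne_eq, Option.some.injEq]; exact fun hhh => hj hhh.symm
    have := C.hzA_ge (j₀ := j₀) hne
    omega
  · intro j hj
    have := gzA_pos (t := t) ht j₀ j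
    omega

/-- Tz covers the pair `(w x, b j₀)` when incomparable, provided the optional head
is either absent or equal to `z x`. -/
lemma zL45 {vo : Option (Fin t)} {j₀ : Fin t} {x : Fin t} (hx : ¬ C.w x < C.b j₀)
    (hc : vo = none ∨ vo = some x) :
    C.TzOrd vo j₀ (C.b j₀) (C.w x) := by
  have ht := C.ht
  apply rev_wb C.a C.b C.w C.z C.hbinj C.hzinj C.hbz C.hstr C.hAB C.hT C.hT'
  · intro j hj
    have hne : vo ≠ some j := by
      rcases hc with rfl | rfl
      · simp
      · simp only [ne_eq, Option.some.injEq]; exact fun hh => hj hh.symm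
    have := C.hzA_ge (j₀ := j₀) hne
    rw [gzA_self]; omega
  · intro j hj
    have hne : j ≠ j₀ := fun hh => hx (hh ▸ hj)
    rw [gzA_self, gzA_ne hne]; omega

/-- Tb covers the pair `(w v₀, z v₀)`, provided the optional head is not above `w v₀`. -/
lemma bL1 {jo : Option (Fin t)} {v₀ : Fin t} (hjo : ∀ j, jo = some j → ¬ C.w v₀ < C.b j) :
    C.TbOrd jo v₀ (C.z v₀) (C.w v₀) := by
  have ht := C.ht
  apply rev_wz C.a C.b C.w C.z C.hbinj C.hzinj C.hbz C.hstr C.hAB C.hT C.hT'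
  · intro j hj
    rw [hbA_self, hbA_ne hj]; omega
  · intro j hj
    have hne : jo ≠ some j := fun hh => hjo j hh hj
    rw [hbA_self, C.gbA_above hne hj]; omega

/-- Tb covers every pair `(w v₀, b q)` with `b q` incomparable to `w v₀`. -/
lemma bL2 {jo : Option (Fin t)} {v₀ : Fin t} (hjo : ∀ j, jo = some j → ¬ C.w v₀ < C.b j)
    {q : Fin t} (hq : ¬ C.w v₀ < C.b q) :
    C.TbOrd jo v₀ (C.b q) (C.w v₀) := by
  have ht := C.ht
  have hqt := q.isLt
  have hlow := C.gbA_low (jo := jo) hq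
  apply rev_wb C.a C.b C.w C.z C.hbinj C.hzinj C.hbz C.hstr C.hAB C.hT C.hT'
  · intro j hj
    rw [hbA_ne hj]; omega
  · intro j hj
    have hne : jo ≠ some j := fun hh => hjo j hh hj
    rw [C.gbA_above hne hj]; omega

/-- Tb with head `b j` covers the pair `(a j, b j)`. -/
lemma bL3 {j v₀ : Fin t} : C.TbOrd (some j) v₀ (C.b j) (C.a j) := by
  have ht := C.ht
  have hh := C.gbA_head (q := j) (v₀ := v₀) rfl
  apply rev_ab C.a C.b C.w C.z C.hbinj C.hzinj C.hbz C.hstr C.hAB C.hT C.hT'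
  · intro p hp
    have hne : (some j : Option (Fin t)) ≠ some p := by
      simp only [ne_eq, Option.some.injEq]; exact fun hhh => hp hhh.symm
    have := C.gbA_ge (v₀ := v₀) hne
    omega
  · intro p hp
    have := hbA_pos (t := t) ht v₀ p
    omega

/-- Tb covers the pair `(a x, z v₀)` when incomparable, provided the optional head
is either absent or `b x`. -/
lemma bL45 {jo : Option (Fin t)} {v₀ : Fin t} {x : Fin t} (hx : ¬ C.a x < C.z v₀)
    (hc : jo = none ∨ jo = some x) :
    C.TbOrd jo v₀ (C.z v₀) (C.a x) := by
  have ht := C.ht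
  apply rev_az C.a C.b C.w C.z C.hbinj C.hzinj C.hbz C.hstr C.hAB C.hT C.hT'
  · intro j hj
    have hne : jo ≠ some j := by
      rcases hc with rfl | rfl
      · simp
      · simp only [ne_eq, Option.some.injEq]; exact fun hh => hj hh.symm
    have := C.gbA_ge (v₀ := v₀) hne
    rw [hbA_self]; omega
  · intro j hj
    have hne : j ≠ v₀ := fun hh => hx (hh ▸ hj)
    rw [hbA_self, hbA_ne hne]; omega

/-- Tb with head `b j` covers every pair `(w x, b j)` with `b j` incomparable to `w x`. -/
lemma bL6 {j v₀ : Fin t} {x : Fin t} (hx : ¬ C.w x < C.b j) :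
    C.TbOrd (some j) v₀ (C.b j) (C.w x) := by
  have ht := C.ht
  have hh := C.gbA_head (q := j) (v₀ := v₀) rfl
  apply rev_wb C.a C.b C.w C.z C.hbinj C.hzinj C.hbz C.hstr C.hAB C.hT C.hT'
  · intro p hp
    have := hbA_pos (t := t) ht v₀ p
    omega
  · intro p hp
    have hne : (some j : Option (Fin t)) ≠ some p := by
      simp only [ne_eq, Option.some.injEq]
      exact fun hhh => hx (hhh ▸ hp)
    have h1 := C.gbA_ge (v₀ := v₀) hne
    omega

end Ctx

section Dichotomy

variable {ι : Type*} [DecidableEq ι] [Fintype ι]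

/-- Greedy construction of a maximal family of disjoint arcs inside `S`. -/
lemma exists_maximal_arcs_aux (Arc : ι → ι → Prop) (hirr : ∀ i, ¬ Arc i i) :
    ∀ S : Finset ι, ∃ lp : List (ι × ι),
      (∀ pr ∈ lp, Arc pr.1 pr.2) ∧
      (lp.flatMap fun pr => [pr.1, pr.2]).Nodup ∧
      (∀ pr ∈ lp, pr.1 ∈ S ∧ pr.2 ∈ S) ∧
      (∀ j ∈ S, ∀ q ∈ S, (∀ pr ∈ lp, j ≠ pr.1 ∧ j ≠ pr.2) →
        (∀ pr ∈ lp, q ≠ pr.1 ∧ q ≠ pr.2) → ¬ Arc j q) := by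
  intro S
  induction S using Finset.strongInduction with
  | _ S ih =>
    by_cases harc : ∃ j ∈ S, ∃ q ∈ S, Arc j q
    · obtain ⟨j, hj, q, hq, hA⟩ := harc
      have hjq : j ≠ q := fun h => hirr j (h ▸ hA)
      have hsub : (S.erase j).erase q ⊂ S := by
        refine Finset.ssubset_iff_of_subset ?_ |>.2 ⟨j, hj, ?_⟩
        · intro x hx
          exact Finset.mem_of_mem_erase (Finset.mem_of_mem_erase hx)
        · intro hmem
          exact Finset.notMem_erase j S (Finset.mem_of_mem_erase hmem)
      obtain ⟨lp, h1, h2, h3, h4⟩ := ih _ hsub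
      refine ⟨(j, q) :: lp, ?_, ?_, ?_, ?_⟩
      · intro pr hpr
        rcases List.mem_cons.1 hpr with rfl | hpr
        · exact hA
        · exact h1 pr hpr
      · rw [List.flatMap_cons]
        refine List.Nodup.append ?_ h2 ?_
        · simp [hjq]
        · intro x hx hx2
          simp only [List.mem_cons, List.not_mem_nil, or_false] at hx
          obtain ⟨pr, hpr, hxx⟩ := List.mem_flatMap.1 hx2
          have hmem := h3 pr hpr
          simp only [List.mem_cons, List.not_mem_nil, or_false] at hxx
          have hx1 : x ∈ (S.erase j).erase q := by
            rcases hxx with rfl | rfl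
            · exact hmem.1
            · exact hmem.2
          rcases hx with rfl | rfl
          · exact Finset.notMem_erase _ _ (Finset.mem_of_mem_erase hx1)
          · exact Finset.notMem_erase _ _ hx1
      · intro pr hpr
        rcases List.mem_cons.1 hpr with rfl | hpr
        · exact ⟨hj, hq⟩
        · have := h3 pr hpr
          exact ⟨Finset.mem_of_mem_erase (Finset.mem_of_mem_erase this.1),
            Finset.mem_of_mem_erase (Finset.mem_of_mem_erase this.2)⟩
      · intro x hx y hy hxav hyav
        have hxj : x ≠ j := (hxav (j, q) (List.mem_cons_self)).1
        have hxq : x ≠ q := (hxav (j, q) (List.mem_cons_self)).2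
        have hyj : y ≠ j := (hyav (j, q) (List.mem_cons_self)).1
        have hyq : y ≠ q := (hyav (j, q) (List.mem_cons_self)).2
        refine h4 x ?_ y ?_ ?_ ?_
        · exact Finset.mem_erase.2 ⟨hxq, Finset.mem_erase.2 ⟨hxj, hx⟩⟩
        · exact Finset.mem_erase.2 ⟨hyq, Finset.mem_erase.2 ⟨hyj, hy⟩⟩
        · intro pr hpr; exact hxav pr (List.mem_cons_of_mem _ hpr)
        · intro pr hpr; exact hyav pr (List.mem_cons_of_mem _ hpr)
    · refine ⟨[], by simp, by simp, by simp, ?_⟩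
      intro x hx y hy _ _ hA
      exact harc ⟨x, hx, y, hy, hA⟩

lemma ep_length : ∀ lp : List (ι × ι), (lp.flatMap fun pr => [pr.1, pr.2]).length = 2 * lp.length := by
  intro lp
  induction lp with
  | nil => simp
  | cons pr l ih => simp [List.flatMap_cons, ih]; omega

lemma map_fst_sublist : ∀ lp : List (ι × ι),
    (lp.map Prod.fst).Sublist (lp.flatMap fun pr => [pr.1, pr.2]) := by
  intro lp
  induction lp with
  | nil => simp
  | cons pr l ih =>
    rw [List.map_cons, List.flatMap_cons]
    exact List.Sublist.cons₂ _ (List.Sublist.cons _ ih)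

end Dichotomy

section Wrapper

/-- If a list of at most `d` linear extensions reverses every incomparable `A×B` pair,
then `Idim α A B ≤ d`. -/
lemma idim_le_of_list (A B : Set α) (d : ℕ) (os : List (α → α → Prop))
    (hlen : os.length ≤ d)
    (hext : ∀ o ∈ os, IsLinearExtension o)
    (odef : α → α → Prop) (hodef : IsLinearExtension odef)
    (hcov : ∀ x ∈ A, ∀ y ∈ B, Incomp x y → ∃ o ∈ os, o y x) :
    Idim α A B ≤ d := by
  apply Nat.sInf_le
  refine ⟨fun i => os.getD i odef, ?_, ?_⟩
  · intro i
    show IsLinearExtension (os.getD (i : ℕ) odef)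
    by_cases hi : (i : ℕ) < os.length
    · rw [List.getD_eq_getElem _ _ hi]
      exact hext _ (List.getElem_mem hi)
    · rw [List.getD_eq_default _ _ (not_lt.1 hi)]
      exact hodef
  · intro x hx y hy hxy
    obtain ⟨o, ho, hoyx⟩ := hcov x hx y hy hxy
    obtain ⟨n, hn, rfl⟩ := List.getElem_of_mem ho
    refine ⟨⟨n, lt_of_lt_of_le hn hlen⟩, ?_⟩
    show os.getD n odef y x
    rw [List.getD_eq_getElem _ _ hn]
    exact hoyx

end Wrapper

namespace Ctx

variable (C : Ctx α t)

/-- An "arc" `(j,q)`: the saving structure of the construction. -/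
def Arc (j q : Fin t) : Prop :=
  j ≠ q ∧ ((¬ C.w j < C.b j ∧ ¬ C.a j < C.z q) ∨ (¬ C.a j < C.z j ∧ ¬ C.w q < C.b j))

/-- Coverage: the list of orders reverses all incomparable min-max pairs. -/
def Covers (os : List (α → α → Prop)) : Prop :=
  (∀ i, ∃ o ∈ os, o (C.b i) (C.a i)) ∧
  (∀ i, ∃ o ∈ os, o (C.z i) (C.w i)) ∧
  (∀ i q, ¬ C.a i < C.z q → ∃ o ∈ os, o (C.z q) (C.a i)) ∧
  (∀ i q, ¬ C.w i < C.b q → ∃ o ∈ os, o (C.b q) (C.w i))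

/-- Scheme for the case of an arc-free set `Rid`: one self-order for each member
of `Rid`, and a pair of default orders for everyone else. -/
lemma scheme2 (hnotS2 : ∀ i, ¬ (C.a i < C.z i ∧ C.w i < C.b i))
    (Rid : Finset (Fin t))
    (hfree : ∀ j ∈ Rid, ∀ q ∈ Rid, j ≠ q → ¬ C.Arc j q) :
    ∃ os : List (α → α → Prop),
      os.length = Rid.card + (Finset.univ \ Rid).card + (Finset.univ \ Rid).card ∧
      (∀ o ∈ os, IsLinearExtension o) ∧ C.Covers os := by
  classical
  set os : List (α → α → Prop) :=
    (Rid.toList.map fun i => if C.a i < C.z i then C.TbOrd (some i) i else C.TzOrd (some i) i)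
    ++ ((Finset.univ \ Rid).toList.map fun u => C.TbOrd none u)
    ++ ((Finset.univ \ Rid).toList.map fun u => C.TzOrd none u) with hos
  have mem1 : ∀ i ∈ Rid,
      (if C.a i < C.z i then C.TbOrd (some i) i else C.TzOrd (some i) i) ∈ os := by
    intro i hi
    apply List.mem_append_left
    apply List.mem_append_left
    exact List.mem_map_of_mem (Finset.mem_toList.2 hi)
  have mem2 : ∀ u, u ∉ Rid → C.TbOrd none u ∈ os := by
    intro u hu
    apply List.mem_append_left
    apply List.mem_append_right
    exact List.mem_map_of_mem (Finset.mem_toList.2 (Finset.mem_sdiff.2 ⟨Finset.mem_univ _, hu⟩))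
  have mem3 : ∀ u, u ∉ Rid → C.TzOrd none u ∈ os := by
    intro u hu
    apply List.mem_append_right
    exact List.mem_map_of_mem (Finset.mem_toList.2 (Finset.mem_sdiff.2 ⟨Finset.mem_univ _, hu⟩))
  refine ⟨os, ?_, ?_, ?_, ?_, ?_, ?_⟩
  · rw [hos]
    simp only [List.length_append, List.length_map, Finset.length_toList]
  · intro o ho
    rw [hos] at ho
    rcases List.mem_append.1 ho with ho | ho
    · rcases List.mem_append.1 ho with ho | ho
      · obtain ⟨i, _, rfl⟩ := List.mem_map.1 ho
        split
        · exact C.TbOrd_lin _ _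
        · exact C.TzOrd_lin _ _
      · obtain ⟨u, _, rfl⟩ := List.mem_map.1 ho
        exact C.TbOrd_lin _ _
    · obtain ⟨u, _, rfl⟩ := List.mem_map.1 ho
      exact C.TzOrd_lin _ _
  -- pairs (a i, b i)
  · intro i
    by_cases hi : i ∈ Rid
    · by_cases hz : C.a i < C.z i
      · refine ⟨_, mem1 i hi, ?_⟩
        rw [if_pos hz]
        exact C.bL3
      · refine ⟨_, mem1 i hi, ?_⟩
        rw [if_neg hz]
        apply C.zL1
        rintro v hv
        rw [Option.some.injEq] at hv
        subst hv
        exact hz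
    · refine ⟨_, mem3 i hi, C.zL1 ?_⟩
      rintro v ⟨⟩
  -- pairs (w i, z i)
  · intro i
    by_cases hi : i ∈ Rid
    · by_cases hz : C.a i < C.z i
      · refine ⟨_, mem1 i hi, ?_⟩
        rw [if_pos hz]
        apply C.bL1
        rintro j hj
        rw [Option.some.injEq] at hj
        subst hj
        exact fun hb => hnotS2 i ⟨hz, hb⟩
      · refine ⟨_, mem1 i hi, ?_⟩
        rw [if_neg hz]
        exact C.zL3
    · refine ⟨_, mem2 i hi, C.bL1 ?_⟩
      rintro j ⟨⟩
  -- pairs (a i, z q) incomparable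
  · intro i q hq
    by_cases hi : i ∈ Rid
    · by_cases hz : C.a i < C.z i
      · have hiq : i ≠ q := fun h => hq (h ▸ hz)
        have hqR : q ∉ Rid := by
          intro hqR
          exact hfree i hi q hqR hiq ⟨hiq, Or.inl ⟨fun hb => hnotS2 i ⟨hz, hb⟩, hq⟩⟩
        exact ⟨_, mem2 q hqR, C.bL45 hq (Or.inl rfl)⟩
      · refine ⟨_, mem1 i hi, ?_⟩
        rw [if_neg hz]
        apply C.zL2 ?_ hq
        rintro v hv
        rw [Option.some.injEq] at hv
        subst hv
        exact hz
    · refine ⟨_, mem3 i hi, C.zL2 ?_ hq⟩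
      rintro v ⟨⟩
  -- pairs (w i, b q) incomparable
  · intro i q hq
    by_cases hqR : q ∈ Rid
    · by_cases hz : C.a q < C.z q
      · refine ⟨_, mem1 q hqR, ?_⟩
        rw [if_pos hz]
        exact C.bL6 hq
      · by_cases hiq : i = q
        · subst hiq
          refine ⟨_, mem1 i hqR, ?_⟩
          rw [if_neg hz]
          exact C.zL45 hq (Or.inr rfl)
        · have hiR : i ∉ Rid := by
            intro hiR
            exact hfree q hqR i hiR (Ne.symm hiq) ⟨Ne.symm hiq, Or.inr ⟨hz, hq⟩⟩
          refine ⟨_, mem2 i hiR, C.bL2 ?_ hq⟩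
          rintro j ⟨⟩
    · exact ⟨_, mem3 q hqR, C.zL45 hq (Or.inl rfl)⟩

/-- Scheme for the case of a family of disjoint arcs: a self-order and a rider order
for each arc, plus default orders for everyone else. -/
lemma scheme1 (lp : List (Fin t × Fin t))
    (harcs : ∀ pr ∈ lp, C.Arc pr.1 pr.2) :
    ∃ os : List (α → α → Prop),
      os.length = lp.length + lp.length
        + (Finset.univ \ (lp.flatMap fun pr => [pr.1, pr.2]).toFinset).card
        + (Finset.univ \ (lp.map Prod.fst).toFinset).card ∧
      (∀ o ∈ os, IsLinearExtension o) ∧ C.Covers os := by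
  classical
  set E : Finset (Fin t) := (lp.flatMap fun pr => [pr.1, pr.2]).toFinset with hE
  set T : Finset (Fin t) := (lp.map Prod.fst).toFinset with hT0
  set selfO : Fin t × Fin t → (α → α → Prop) := fun pr =>
    if (¬ C.w pr.1 < C.b pr.1 ∧ ¬ C.a pr.1 < C.z pr.2)
    then C.TbOrd (some pr.1) pr.1 else C.TzOrd (some pr.1) pr.1 with hself
  set riderO : Fin t × Fin t → (α → α → Prop) := fun pr =>
    if (¬ C.w pr.1 < C.b pr.1 ∧ ¬ C.a pr.1 < C.z pr.2)
    then C.TzOrd (some pr.2) pr.1 else C.TbOrd (some pr.1) pr.2 with hrider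
  set os : List (α → α → Prop) :=
    (lp.map selfO) ++ (lp.map riderO)
    ++ ((Finset.univ \ E).toList.map fun u => C.TbOrd none u)
    ++ ((Finset.univ \ T).toList.map fun u => C.TzOrd none u) with hos
  have memS : ∀ pr ∈ lp, selfO pr ∈ os := by
    intro pr hpr
    exact List.mem_append_left _ (List.mem_append_left _
      (List.mem_append_left _ (List.mem_map_of_mem hpr)))
  have memR : ∀ pr ∈ lp, riderO pr ∈ os := by
    intro pr hpr
    exact List.mem_append_left _ (List.mem_append_left _
      (List.mem_append_right _ (List.mem_map_of_mem hpr)))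
  have memE : ∀ u, u ∉ E → C.TbOrd none u ∈ os := by
    intro u hu
    exact List.mem_append_left _ (List.mem_append_right _
      (List.mem_map_of_mem (Finset.mem_toList.2 (Finset.mem_sdiff.2 ⟨Finset.mem_univ _, hu⟩))))
  have memT : ∀ u, u ∉ T → C.TzOrd none u ∈ os := by
    intro u hu
    exact List.mem_append_right _
      (List.mem_map_of_mem (Finset.mem_toList.2 (Finset.mem_sdiff.2 ⟨Finset.mem_univ _, hu⟩)))
  have hTmem : ∀ i : Fin t, i ∈ T ↔ ∃ pr ∈ lp, pr.1 = i := by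
    intro i
    rw [hT0]
    simp [List.mem_map]
  have hEmem : ∀ i : Fin t, i ∈ E ↔ ∃ pr ∈ lp, pr.1 = i ∨ pr.2 = i := by
    intro i
    rw [hE]
    simp only [List.mem_toFinset, List.mem_flatMap, List.mem_cons, List.not_mem_nil, or_false]
    constructor
    · rintro ⟨pr, hpr, h | h⟩
      · exact ⟨pr, hpr, Or.inl h.symm⟩
      · exact ⟨pr, hpr, Or.inr h.symm⟩
    · rintro ⟨pr, hpr, h | h⟩
      · exact ⟨pr, hpr, Or.inl h.symm⟩
      · exact ⟨pr, hpr, Or.inr h.symm⟩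
  refine ⟨os, ?_, ?_, ?_, ?_, ?_, ?_⟩
  · rw [hos]
    simp only [List.length_append, List.length_map, Finset.length_toList]
  · intro o ho
    rw [hos] at ho
    rcases List.mem_append.1 ho with ho | ho
    · rcases List.mem_append.1 ho with ho | ho
      · rcases List.mem_append.1 ho with ho | ho
        · obtain ⟨pr, _, rfl⟩ := List.mem_map.1 ho
          rw [hself]
          dsimp only
          split
          · exact C.TbOrd_lin _ _
          · exact C.TzOrd_lin _ _
        · obtain ⟨pr, _, rfl⟩ := List.mem_map.1 ho
          rw [hrider]
          dsimp only
          split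
          · exact C.TzOrd_lin _ _
          · exact C.TbOrd_lin _ _
      · obtain ⟨u, _, rfl⟩ := List.mem_map.1 ho
        exact C.TbOrd_lin _ _
    · obtain ⟨u, _, rfl⟩ := List.mem_map.1 ho
      exact C.TzOrd_lin _ _
  -- pairs (a i, b i)
  · intro i
    by_cases h1 : ∃ pr ∈ lp, pr.1 = i
    · obtain ⟨pr, hpr, hpr1⟩ := h1
      refine ⟨selfO pr, memS pr hpr, ?_⟩
      rw [hself]
      dsimp only
      split
      · rename_i hAc
        rw [← hpr1]
        exact C.bL3
      · rename_i hAc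
        have hBc := (harcs pr hpr).2.resolve_left hAc
        rw [← hpr1]
        apply C.zL1
        rintro v hv
        rw [Option.some.injEq] at hv
        subst hv
        exact hBc.1
    · refine ⟨_, memT i (fun hi => h1 ((hTmem i).1 hi)), C.zL1 ?_⟩
      rintro v ⟨⟩
  -- pairs (w i, z i)
  · intro i
    by_cases h1 : ∃ pr ∈ lp, pr.1 = i
    · obtain ⟨pr, hpr, hpr1⟩ := h1
      refine ⟨selfO pr, memS pr hpr, ?_⟩
      rw [hself]
      dsimp only
      split
      · rename_i hAc
        rw [← hpr1]
        apply C.bL1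
        rintro j hj
        rw [Option.some.injEq] at hj
        subst hj
        exact hAc.1
      · rename_i hAc
        rw [← hpr1]
        exact C.zL3
    · by_cases h2 : ∃ pr ∈ lp, pr.2 = i
      · obtain ⟨pr, hpr, hpr2⟩ := h2
        refine ⟨riderO pr, memR pr hpr, ?_⟩
        rw [hrider]
        dsimp only
        split
        · rename_i hAc
          rw [← hpr2]
          exact C.zL3
        · rename_i hAc
          have hBc := (harcs pr hpr).2.resolve_left hAc
          rw [← hpr2]
          apply C.bL1
          rintro j hj
          rw [Option.some.injEq] at hj
          subst hj
          exact hBc.2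
      · have hiE : i ∉ E := by
          intro hi
          rcases (hEmem i).1 hi with ⟨pr, hpr, h | h⟩
          · exact h1 ⟨pr, hpr, h⟩
          · exact h2 ⟨pr, hpr, h⟩
        refine ⟨_, memE i hiE, C.bL1 ?_⟩
        rintro j ⟨⟩
  -- pairs (a i, z q) incomparable
  · intro i q hq
    by_cases h1 : ∃ pr ∈ lp, pr.1 = i
    · obtain ⟨pr, hpr, hpr1⟩ := h1
      by_cases hAc : (¬ C.w pr.1 < C.b pr.1 ∧ ¬ C.a pr.1 < C.z pr.2)
      · refine ⟨riderO pr, memR pr hpr, ?_⟩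
        rw [hrider]
        dsimp only
        rw [if_pos hAc, ← hpr1]
        apply C.zL2 ?_ (hpr1 ▸ hq)
        rintro v hv
        rw [Option.some.injEq] at hv
        subst hv
        exact hAc.2
      · have hBc := (harcs pr hpr).2.resolve_left hAc
        refine ⟨selfO pr, memS pr hpr, ?_⟩
        rw [hself]
        dsimp only
        rw [if_neg hAc, ← hpr1]
        apply C.zL2 ?_ (hpr1 ▸ hq)
        rintro v hv
        rw [Option.some.injEq] at hv
        subst hv
        exact hBc.1
    · refine ⟨_, memT i (fun hi => h1 ((hTmem i).1 hi)), C.zL2 ?_ hq⟩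
      rintro v ⟨⟩
  -- pairs (w i, b q) incomparable
  · intro i q hq
    by_cases h1 : ∃ pr ∈ lp, pr.1 = q
    · obtain ⟨pr, hpr, hpr1⟩ := h1
      by_cases hAc : (¬ C.w pr.1 < C.b pr.1 ∧ ¬ C.a pr.1 < C.z pr.2)
      · refine ⟨selfO pr, memS pr hpr, ?_⟩
        rw [hself]
        dsimp only
        rw [if_pos hAc, ← hpr1]
        exact C.bL6 (hpr1 ▸ hq)
      · refine ⟨riderO pr, memR pr hpr, ?_⟩
        rw [hrider]
        dsimp only
        rw [if_neg hAc, ← hpr1]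
        exact C.bL6 (hpr1 ▸ hq)
    · refine ⟨_, memT q (fun hi => h1 ((hTmem q).1 hi)), C.zL45 hq (Or.inl rfl)⟩

end Ctx

theorem stmt_16_proof (α : Type*) [PartialOrder α] [Fintype α] (A B : Set α)
    (hA : ∀ a ∈ A, IsMin a) (hB : ∀ b ∈ B, IsMax b)
    (hcover : A ∪ B = Set.univ) (hdisj : Disjoint A B)
    (s : ℕ) (hs : 1 ≤ s)
    (hcard : Fintype.card α = 4 * (5 * s))
    (a b w z : Fin (5 * s) → α)
    (ha : Function.Injective a) (hb : Function.Injective b)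
    (hw : Function.Injective w) (hz : Function.Injective z)
    (haw : ∀ i j, a i ≠ w j) (hbz : ∀ i j, b i ≠ z j)
    (hAeq : A = Set.range a ∪ Set.range w)
    (hBeq : B = Set.range b ∪ Set.range z)
    (hT : ∀ i j, a i < b j ↔ i ≠ j)
    (hT' : ∀ i j, w i < z j ↔ i ≠ j)
    (hnotS2 : ∀ i, ¬ (a i < z i ∧ w i < b i)) :
    Idim α A B ≤ 9 * s := by
  classical
  -- membership facts
  have hmemA : ∀ x : α, AForm a w x → x ∈ A := by
    rintro x (⟨i, rfl⟩ | ⟨i, rfl⟩) <;> rw [hAeq]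
    · exact Or.inl ⟨i, rfl⟩
    · exact Or.inr ⟨i, rfl⟩
  have hmemB : ∀ x : α, BForm b z x → x ∈ B := by
    rintro x (⟨i, rfl⟩ | ⟨i, rfl⟩) <;> rw [hBeq]
    · exact Or.inl ⟨i, rfl⟩
    · exact Or.inr ⟨i, rfl⟩
  have hABd : ∀ x : α, AForm a w x → ¬ BForm b z x := fun x hx hy =>
    Set.disjoint_left.mp hdisj (hmemA x hx) (hmemB x hy)
  -- cross-distinctness
  have hab : ∀ i j, a i ≠ b j := fun i j h =>
    hABd (a i) (Or.inl ⟨i, rfl⟩) (Or.inl ⟨j, h.symm⟩)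
  have haz : ∀ i j, a i ≠ z j := fun i j h =>
    hABd (a i) (Or.inl ⟨i, rfl⟩) (Or.inr ⟨j, h.symm⟩)
  have hwb : ∀ i j, w i ≠ b j := fun i j h =>
    hABd (w i) (Or.inr ⟨i, rfl⟩) (Or.inl ⟨j, h.symm⟩)
  have hwz : ∀ i j, w i ≠ z j := fun i j h =>
    hABd (w i) (Or.inr ⟨i, rfl⟩) (Or.inr ⟨j, h.symm⟩)
  -- the covering bijection
  set e : (Fin (5*s) ⊕ Fin (5*s)) ⊕ (Fin (5*s) ⊕ Fin (5*s)) → α :=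
    Sum.elim (Sum.elim a w) (Sum.elim b z) with he
  have hinj : Function.Injective e := by
    rintro ((i | i) | (i | i)) ((j | j) | (j | j)) h <;>
      simp only [he, Sum.elim_inl, Sum.elim_inr] at h
    · rw [ha h]
    · exact absurd h (haw i j)
    · exact absurd h (hab i j)
    · exact absurd h (haz i j)
    · exact absurd h.symm (haw j i)
    · rw [hw h]
    · exact absurd h (hwb i j)
    · exact absurd h (hwz i j)
    · exact absurd h.symm (hab j i)
    · exact absurd h.symm (hwb j i)
    · rw [hb h]
    · exact absurd h (hbz i j)
    · exact absurd h.symm (haz j i)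
    · exact absurd h.symm (hwz j i)
    · exact absurd h.symm (hbz j i)
    · rw [hz h]
  have hcard2 : Fintype.card ((Fin (5*s) ⊕ Fin (5*s)) ⊕ (Fin (5*s) ⊕ Fin (5*s)))
      = Fintype.card α := by
    simp only [Fintype.card_sum, Fintype.card_fin, hcard]
    ring
  have hsurj : Function.Surjective e :=
    ((Fintype.bijective_iff_injective_and_card e).2 ⟨hinj, hcard2⟩).2
  have hcov2 : ∀ v : α, AForm a w v ∨ BForm b z v := by
    intro v
    obtain ⟨u, rfl⟩ := hsurj v
    rcases u with (i | i) | (i | i)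
    · exact Or.inl (Or.inl ⟨i, rfl⟩)
    · exact Or.inl (Or.inr ⟨i, rfl⟩)
    · exact Or.inr (Or.inl ⟨i, rfl⟩)
    · exact Or.inr (Or.inr ⟨i, rfl⟩)
  have hstr : ∀ u v : α, u < v → AForm a w u ∧ BForm b z v := by
    intro u v huv
    constructor
    · rcases hcov2 u with hu | hu
      · exact hu
      · exfalso
        have hmax := hB u (hmemB u hu)
        exact (ne_of_lt huv) (le_antisymm huv.le (hmax huv.le))
    · rcases hcov2 v with hv | hv
      · exfalso
        have hmin := hA v (hmemA v hv)
        exact (ne_of_lt huv) (le_antisymm huv.le (hmin huv.le))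
      · exact hv
  set C : Ctx α (5 * s) :=
    ⟨a, b, w, z, by omega, hb, hz, hbz, hstr, hABd, hT, hT'⟩ with hC
  -- converting coverage to the Idim requirement
  have final : ∀ os : List (α → α → Prop), C.Covers os →
      ∀ x ∈ A, ∀ y ∈ B, Incomp x y → ∃ o ∈ os, o y x := by
    intro os hc x hx y hy hxy
    rw [hAeq] at hx
    rw [hBeq] at hy
    rcases hx with ⟨i, rfl⟩ | ⟨i, rfl⟩ <;> rcases hy with ⟨q, rfl⟩ | ⟨q, rfl⟩
    · have hiq : i = q := by
        by_contra hne
        exact hxy.1 (le_of_lt ((hT i q).2 hne))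
      subst hiq
      exact hc.1 i
    · exact hc.2.2.1 i q (fun hlt => hxy.1 hlt.le)
    · exact hc.2.2.2 i q (fun hlt => hxy.1 hlt.le)
    · have hiq : i = q := by
        by_contra hne
        exact hxy.1 (le_of_lt ((hT' i q).2 hne))
      subst hiq
      exact hc.2.1 i
  have hodef : IsLinearExtension (C.TzOrd none ⟨0, by omega⟩) := C.TzOrd_lin _ _
  -- the dichotomy
  obtain ⟨lp, harcs, hnd, hmemS, hmax⟩ :=
    exists_maximal_arcs_aux C.Arc (fun i hi => hi.1 rfl) Finset.univ
  have hcardU : (Finset.univ : Finset (Fin (5*s))).card = 5 * s := by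
    simp [Finset.card_univ]
  by_cases hbig : s ≤ lp.length
  · -- case 1: enough disjoint arcs
    obtain ⟨os, hlen, hext, hcovs⟩ := C.scheme1 lp harcs
    have hcardE : ((lp.flatMap fun pr => [pr.1, pr.2]).toFinset).card = 2 * lp.length := by
      rw [List.toFinset_card_of_nodup hnd, ep_length]
    have hcardT : ((lp.map Prod.fst).toFinset).card = lp.length := by
      rw [List.toFinset_card_of_nodup (hnd.sublist (map_fst_sublist lp)), List.length_map]
    have hEle : ((lp.flatMap fun pr => [pr.1, pr.2]).toFinset).card ≤ 5 * s := by
      exact le_trans (Finset.card_le_univ _) (le_of_eq hcardU)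
    have h1 : (Finset.univ \ (lp.flatMap fun pr => [pr.1, pr.2]).toFinset).card
        = 5 * s - 2 * lp.length := by
      rw [Finset.card_sdiff_of_subset (Finset.subset_univ _), hcardU, hcardE]
    have h2 : (Finset.univ \ (lp.map Prod.fst).toFinset).card = 5 * s - lp.length := by
      rw [Finset.card_sdiff_of_subset (Finset.subset_univ _), hcardU, hcardT]
    have hlenle : os.length ≤ 9 * s := by
      rw [hlen, h1, h2]
      omega
    exact idim_le_of_list A B (9 * s) os hlenle hext _ hodef (final os hcovs)
  · -- case 2: a large arc-free set
    push_neg at hbig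
    set E : Finset (Fin (5*s)) := (lp.flatMap fun pr => [pr.1, pr.2]).toFinset with hE
    have hcardE : E.card = 2 * lp.length := by
      rw [hE, List.toFinset_card_of_nodup hnd, ep_length]
    have hcomp : s ≤ (Finset.univ \ E).card := by
      rw [Finset.card_sdiff_of_subset (Finset.subset_univ _), hcardU, hcardE]
      omega
    obtain ⟨Rid, hRsub, hRcard⟩ := Finset.exists_subset_card_eq hcomp
    have havoid : ∀ j ∈ Rid, ∀ pr ∈ lp, j ≠ pr.1 ∧ j ≠ pr.2 := by
      intro j hj pr hpr
      have hjE : j ∉ E := (Finset.mem_sdiff.1 (hRsub hj)).2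
      constructor <;> intro h <;> apply hjE <;> rw [hE, List.mem_toFinset] <;>
        exact List.mem_flatMap.2 ⟨pr, hpr, by simp [h]⟩
    have hfree : ∀ j ∈ Rid, ∀ q ∈ Rid, j ≠ q → ¬ C.Arc j q := by
      intro j hj q hq _
      exact hmax j (Finset.mem_univ _) q (Finset.mem_univ _) (havoid j hj) (havoid q hq)
    obtain ⟨os, hlen, hext, hcovs⟩ := C.scheme2 hnotS2 Rid hfree
    have h1 : (Finset.univ \ Rid).card = 5 * s - s := by
      rw [Finset.card_sdiff_of_subset (Finset.subset_univ _), hcardU, hRcard]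
    have hlenle : os.length ≤ 9 * s := by
      rw [hlen, h1, hRcard]
      omega
    exact idim_le_of_list A B (9 * s) os hlenle hext _ hodef (final os hcovs)

end Idim16

end Idim16

/-- Let `s ≥ 1`, `t = 5s`, and let `P = A ∪ B` be a balanced bipartite poset with
`|P| = 4t`, partitioned into two disjoint copies `T`, `T'` of the standard example
`S_t`, with matchings `T = {a₁,…,a_t} ∪ {b₁,…,b_t}` and `T' = {w₁,…,w_t} ∪ {z₁,…,z_t}`.
If for each `i` the 4-element subposet `{aᵢ, bᵢ, wᵢ, zᵢ}` is not a copy of `S₂`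
(equivalently, not both `aᵢ < zᵢ` and `wᵢ < bᵢ` hold), then `Idim P ≤ 9s`. -/
theorem stmt_16 (α : Type*) [PartialOrder α] [Fintype α] (A B : Set α)
    (hA : ∀ a ∈ A, IsMin a) (hB : ∀ b ∈ B, IsMax b)
    (hcover : A ∪ B = Set.univ) (hdisj : Disjoint A B)
    (s : ℕ) (hs : 1 ≤ s)
    (hcard : Fintype.card α = 4 * (5 * s))
    (a b w z : Fin (5 * s) → α)
    (ha : Function.Injective a) (hb : Function.Injective b)
    (hw : Function.Injective w) (hz : Function.Injective z)
    (haw : ∀ i j, a i ≠ w j) (hbz : ∀ i j, b i ≠ z j)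
    (hAeq : A = Set.range a ∪ Set.range w)
    (hBeq : B = Set.range b ∪ Set.range z)
    (hT : ∀ i j, a i < b j ↔ i ≠ j)
    (hT' : ∀ i j, w i < z j ↔ i ≠ j)
    (hnotS2 : ∀ i, ¬ (a i < z i ∧ w i < b i)) :
    Idim α A B ≤ 9 * s := by
  exact Idim16.stmt_16_proof α A B hA hB hcover hdisj s hs hcard a b w z
    ha hb hw hz haw hbz hAeq hBeq hT hT' hnotS2
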